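/- Let n ≥ 3 be an integer, let q be a prime power, and let λ be an element of the finite field F_{q^n} of multiplicative order (q^n − 1)/gcd(n, q−1). Then for every integer i with 0 ≤ i ≤ n − 1 and every nonzero z ∈ F_q (viewed inside F_{q^n} via the canonical embedding), the equation λ^{q^i + 1} = z has no solution; that is, λ^{q^i + 1} does not lie in the subfield F_q. -/

import Mathlib

private lemma geom_mul_eq (q : ℕ) (hq : 1 ≤ q) (n : ℕ) :
    (q - 1) * ∑ j ∈ Finset.range n, q ^ j = q ^ n - 1 := by
  induction n with
  | zero => simp
  | succ n ih =>
    rw [Finset.sum_range_succ, Nat.mul_add, ih, Nat.sub_mul, one_mul, pow_succ,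
      Nat.mul_comm q (q ^ n)]
    have h1 : 1 ≤ q ^ n := Nat.one_le_pow _ _ hq
    have h2 : q ^ n ≤ q ^ n * q := Nat.le_mul_of_pos_right _ hq
    omega

private lemma dvd_pow_gcd_sub_one {m q a b : ℕ} (hq : 1 ≤ q)
    (ha : m ∣ q ^ a - 1) (hb : m ∣ q ^ b - 1) : m ∣ q ^ Nat.gcd a b - 1 := by
  have cast1 : ∀ k : ℕ, m ∣ q ^ k - 1 → (q : ZMod m) ^ k = 1 := by
    intro k hk
    have h1 : (1 : ℕ) ≤ q ^ k := Nat.one_le_pow _ _ hq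
    have := (ZMod.natCast_eq_zero_iff (q ^ k - 1) m).mpr hk
    rwa [Nat.cast_sub h1, Nat.cast_pow, Nat.cast_one, sub_eq_zero] at this
  have hg : (q : ZMod m) ^ Nat.gcd a b = 1 :=
    pow_gcd_eq_one.mpr ⟨cast1 a ha, cast1 b hb⟩
  have h1 : (1 : ℕ) ≤ q ^ Nat.gcd a b := Nat.one_le_pow _ _ hq
  rw [← ZMod.natCast_eq_zero_iff, Nat.cast_sub h1, Nat.cast_pow, Nat.cast_one,
    sub_eq_zero, hg]


private lemma case1_aux (s : ℕ) (h3 : (s + 2) ^ 3 ≤ (s + 1) * ((s + 1) * 2) + 1) : False := by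
  nlinarith [h3, sq_nonneg s]

private lemma case2_aux (s b : ℕ) (h4 : s * s + 4 * s + 4 ≤ b)
    (hA : b * b ≤ (s + 1) * ((s + 1) * (b + 1)) + 1) : False := by
  have h5 : (s * s + 4 * s + 4) * b ≤ b * b := Nat.mul_le_mul_right b h4
  have h6 : (2 * s + 3) * (s * s + 4 * s + 4) ≤ (2 * s + 3) * b := Nat.mul_le_mul_left _ h4
  nlinarith [h4, hA, h5, h6]

private lemma case3_aux (s c : ℕ)
    (hA : (c + 2) * ((s + 2) * (s + 2)) ≤ (s + 1) * ((s + 1) * (c + 1)) + 1) : False := by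
  nlinarith [hA]

/-- Let `n ≥ 3`, let `q` be a prime power, and let `λ` be an element of `F_{q^n}` of
multiplicative order `(q ^ n - 1) / gcd n (q - 1)`.  Then for every `0 ≤ i ≤ n - 1` and
every nonzero `z ∈ F_q`, we have `λ ^ (q ^ i + 1) ≠ z`; that is, `λ ^ (q ^ i + 1)` does
not lie in the subfield `F_q`. -/
theorem pow_qi_add_one_not_in_base_field
    (n q : ℕ) (hn : 3 ≤ n) (hq : IsPrimePow q)
    (F E : Type*) [Field F] [Field E] [Algebra F E]
    [Fintype F] [Fintype E]
    (hF : Fintype.card F = q) (hE : Fintype.card E = q ^ n)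
    (lam : E) (hlam : orderOf lam = (q ^ n - 1) / Nat.gcd n (q - 1)) :
    ∀ i : ℕ, i ≤ n - 1 → ∀ z : F, z ≠ 0 → lam ^ (q ^ i + 1) ≠ algebraMap F E z := by
  intro i hi z hz heq
  have hq2 : 2 ≤ q := hq.two_le
  set d := Nat.gcd n (q - 1) with hd
  have hdpos : 0 < d := Nat.gcd_pos_of_pos_left _ (by omega)
  have hd_le : d ≤ q - 1 := Nat.le_of_dvd (by omega) (Nat.gcd_dvd_right n (q - 1))
  -- z ^ (q-1) = 1
  have hz1 : z ^ (q - 1) = 1 := by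
    have := FiniteField.pow_card_sub_one_eq_one z hz
    rwa [hF] at this
  have hpow : lam ^ ((q ^ i + 1) * (q - 1)) = 1 := by
    rw [pow_mul, heq, ← map_pow, hz1, map_one]
  have hdvd : (q ^ n - 1) / d ∣ (q ^ i + 1) * (q - 1) := by
    rw [← hlam]; exact orderOf_dvd_of_pow_eq_one hpow
  -- geometric sum M, with d ∣ M
  set M : ℕ := ∑ j ∈ Finset.range n, q ^ j with hMdef
  have hgeo : (q - 1) * M = q ^ n - 1 := geom_mul_eq q (by omega) n
  have hdM : d ∣ M := by
    have hMeq : M = (∑ j ∈ Finset.range n, (q ^ j - 1)) + n := by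
      rw [hMdef]
      have : ∀ j ∈ Finset.range n, q ^ j = (q ^ j - 1) + 1 := by
        intro j _
        have : (1 : ℕ) ≤ q ^ j := Nat.one_le_pow _ _ (by omega)
        omega
      rw [Finset.sum_congr rfl this, Finset.sum_add_distrib, Finset.sum_const,
        Finset.card_range, smul_eq_mul, mul_one]
    rw [hMeq]
    refine Nat.dvd_add (Finset.dvd_sum fun j _ => ?_) (Nat.gcd_dvd_left n (q - 1))
    refine (Nat.gcd_dvd_right n (q - 1)).trans ?_
    simpa using Nat.sub_dvd_pow_sub_pow q 1 j
  set M' : ℕ := M / d with hM'def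
  have hMM' : M = d * M' := (Nat.mul_div_cancel' hdM).symm
  have key : q ^ n - 1 = d * ((q - 1) * M') := by rw [← hgeo, hMM']; ring
  have hquot : (q ^ n - 1) / d = (q - 1) * M' := by
    rw [key, Nat.mul_div_cancel_left _ hdpos]
  rw [hquot] at hdvd
  have hMi : M' ∣ q ^ i + 1 := by
    rw [mul_comm (q ^ i + 1)] at hdvd
    exact (Nat.mul_dvd_mul_iff_left (show 0 < q - 1 by omega)).mp hdvd
  have hqn1 : 1 < q ^ n := Nat.one_lt_pow (by omega) (by omega)
  have hM'pos : 0 < M' := by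
    rcases Nat.eq_zero_or_pos M' with h | h
    · rw [h, mul_zero, mul_zero] at key; omega
    · exact h
  -- common bound: q^n - 1 ≤ (q-1) * ((q-1) * M')
  have hbound : q ^ n - 1 ≤ (q - 1) * ((q - 1) * M') := by
    rw [key]; exact Nat.mul_le_mul_right _ hd_le
  obtain ⟨s, rfl⟩ : ∃ s, q = s + 2 := ⟨q - 2, by omega⟩
  have hs : s + 2 - 1 = s + 1 := by omega
  rcases Nat.eq_zero_or_pos i with rfl | hipos
  · -- i = 0 : M' ∣ 2
    have hM2 : M' ≤ 2 := Nat.le_of_dvd (by norm_num) (by simpa using hMi)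
    have h3 : (s + 2) ^ 3 ≤ (s + 2) ^ n := Nat.pow_le_pow_right (by omega) hn
    refine case1_aux s ?_
    have : (s + 2) ^ n ≤ (s + 1) * ((s + 1) * 2) + 1 := by
      calc (s + 2) ^ n = ((s + 2) ^ n - 1) + 1 := by omega
        _ ≤ (s + 1) * ((s + 1) * M') + 1 := by rw [← hs]; omega
        _ ≤ (s + 1) * ((s + 1) * 2) + 1 := by
            exact Nat.add_le_add_right (Nat.mul_le_mul_left _ (Nat.mul_le_mul_left _ hM2)) 1
    omega
  · by_cases h2i : 2 * i = n
    · -- 2i = n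
      have hi2 : 2 ≤ i := by omega
      have hb : M' ≤ (s + 2) ^ i + 1 := Nat.le_of_dvd (by positivity) hMi
      set b := (s + 2) ^ i with hbdef
      have hbq : (s + 2) ^ 2 ≤ b := Nat.pow_le_pow_right (by omega) hi2
      have hbn : (s + 2) ^ n = b * b := by rw [← h2i, two_mul, pow_add]
      have hA : b * b ≤ (s + 1) * ((s + 1) * (b + 1)) + 1 := by
        calc b * b = ((s + 2) ^ n - 1) + 1 := by rw [hbn]; omega
          _ ≤ (s + 1) * ((s + 1) * M') + 1 := by rw [← hs]; omega
          _ ≤ (s + 1) * ((s + 1) * (b + 1)) + 1 :=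
            Nat.add_le_add_right (Nat.mul_le_mul_left _ (Nat.mul_le_mul_left _ hb)) 1
      have hb4 : s * s + 4 * s + 4 ≤ b := by
        have : (s + 2) ^ 2 = s * s + 4 * s + 4 := by ring
        omega
      exact case2_aux s b hb4 hA
    · -- general case: e = gcd(2i, n) ≤ n - 2
      set e := Nat.gcd (2 * i) n with hedef
      have he1 : 1 ≤ e := Nat.gcd_pos_of_pos_left _ (by omega)
      have he_dvd : e ∣ n := Nat.gcd_dvd_right _ _
      have hen : e ≠ n := by
        intro h
        have h2 : n ∣ 2 * i := h ▸ Nat.gcd_dvd_left (2 * i) n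
        obtain ⟨k, hk⟩ := h2
        have hk0 : k ≠ 0 := by rintro rfl; omega
        have hk1 : k ≠ 1 := by rintro rfl; omega
        have : n * 2 ≤ n * k := Nat.mul_le_mul_left n (by omega)
        omega
      have he2 : e + 2 ≤ n := by
        obtain ⟨k, hk⟩ := he_dvd
        have hk2 : 2 ≤ k := by
          have hk0 : k ≠ 0 := by rintro rfl; omega
          have hk1 : k ≠ 1 := by rintro rfl; exact hen (by omega)
          omega
        have : e * 2 ≤ e * k := Nat.mul_le_mul_left e hk2
        omega
      have hsq : (s + 2) ^ (2 * i) = (s + 2) ^ i * (s + 2) ^ i := by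
        rw [two_mul, pow_add]
      have h2idvd : M' ∣ (s + 2) ^ (2 * i) - 1 := by
        refine hMi.trans ⟨(s + 2) ^ i - 1, ?_⟩
        have h1 : (1 : ℕ) ≤ (s + 2) ^ i := Nat.one_le_pow _ _ (by omega)
        obtain ⟨c, hc⟩ : ∃ c, (s + 2) ^ i = c + 1 := ⟨(s + 2) ^ i - 1, by omega⟩
        rw [hsq, hc]
        have : (c + 1) * (c + 1) = (c + 1 + 1) * (c + 1 - 1) + 1 := by
          simp only [Nat.add_sub_cancel]; ring
        omega
      have hndvd : M' ∣ (s + 2) ^ n - 1 := ⟨d * (s + 2 - 1), by rw [key]; ring⟩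
      have hM'e : M' ∣ (s + 2) ^ e - 1 := dvd_pow_gcd_sub_one (by omega) h2idvd hndvd
      have hqe1 : 2 ≤ (s + 2) ^ e := by
        calc 2 = 2 ^ 1 := by norm_num
          _ ≤ (s + 2) ^ e := Nat.pow_le_pow_left (by omega) e |>.trans'
              (Nat.pow_le_pow_right (by omega) he1)
      have hle : M' ≤ (s + 2) ^ e - 1 := Nat.le_of_dvd (by omega) hM'e
      have hee : (s + 2) ^ e ≤ (s + 2) ^ (n - 2) := Nat.pow_le_pow_right (by omega) (by omega)
      set a := (s + 2) ^ (n - 2) with hadef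
      have ha2 : 2 ≤ a := by
        calc 2 ≤ s + 2 := by omega
          _ = (s + 2) ^ 1 := (pow_one _).symm
          _ ≤ a := Nat.pow_le_pow_right (by omega) (by omega)
      have han : (s + 2) ^ n = a * ((s + 2) * (s + 2)) := by
        rw [hadef, show (s + 2) * (s + 2) = (s + 2) ^ 2 by ring, ← pow_add]
        congr 1
        omega
      obtain ⟨c, hc⟩ : ∃ c, a = c + 2 := ⟨a - 2, by omega⟩
      have hM'le : M' ≤ c + 1 := by omega
      have hA : a * ((s + 2) * (s + 2)) ≤ (s + 1) * ((s + 1) * (c + 1)) + 1 := by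
        calc a * ((s + 2) * (s + 2)) = ((s + 2) ^ n - 1) + 1 := by rw [han]; omega
          _ ≤ (s + 1) * ((s + 1) * M') + 1 := by rw [← hs]; omega
          _ ≤ (s + 1) * ((s + 1) * (c + 1)) + 1 :=
            Nat.add_le_add_right (Nat.mul_le_mul_left _ (Nat.mul_le_mul_left _ hM'le)) 1
      rw [hc] at hA
      exact case3_aux s c hA
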